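/- A metric space (X,d) is a Busemann space if and only if there exists a (unique) convexity mapping W such that (X,d,W) is a uniquely geodesic W-hyperbolic space. -/

import Mathlib

open Metric Set

/-- A geodesic segment in a metric space joining `x` and `y`: the image of an
isometric embedding of a real interval sending the endpoints to `x` and `y`. -/
def IsGeodesicSegment {X : Type*} [MetricSpace X] (S : Set X) (x y : X) : Prop :=
  ∃ (a b : ℝ) (γ : ℝ → X), a ≤ b ∧ γ a = x ∧ γ b = y ∧
    (∀ s ∈ Set.Icc a b, ∀ t ∈ Set.Icc a b, dist (γ s) (γ t) = |s - t|) ∧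
    S = γ '' Set.Icc a b

/-- A metric space is geodesic if every two points are joined by a geodesic segment. -/
def GeodesicSpace (X : Type*) [MetricSpace X] : Prop :=
  ∀ x y : X, ∃ S : Set X, IsGeodesicSegment S x y

/-- `(X,d,W)` is a W-hyperbolic space: the convexity mapping `W` satisfies
axioms (W1)-(W4) for all parameters in `[0,1]`. -/
def IsWHyperbolic {X : Type*} [MetricSpace X] (W : X → X → ℝ → X) : Prop :=
  (∀ x y z : X, ∀ l ∈ Set.Icc (0:ℝ) 1,
      dist z (W x y l) ≤ (1 - l) * dist z x + l * dist z y) ∧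
  (∀ x y : X, ∀ l ∈ Set.Icc (0:ℝ) 1, ∀ l' ∈ Set.Icc (0:ℝ) 1,
      dist (W x y l) (W x y l') = |l - l'| * dist x y) ∧
  (∀ x y : X, ∀ l ∈ Set.Icc (0:ℝ) 1, W x y l = W y x (1 - l)) ∧
  (∀ x y z w : X, ∀ l ∈ Set.Icc (0:ℝ) 1,
      dist (W x z l) (W y w l) ≤ (1 - l) * dist x y + l * dist z w)

/-- An affinely reparametrized geodesic on `[a,b]`: a constant path or a geodesic
precomposed with an affine homeomorphism, i.e. `d(γ s, γ t) = c|s-t|` for some `c ≥ 0`. -/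
def AffinelyReparamGeodesic {X : Type*} [MetricSpace X] (γ : ℝ → X) (a b : ℝ) : Prop :=
  ∃ c : ℝ, 0 ≤ c ∧ ∀ s ∈ Set.Icc a b, ∀ t ∈ Set.Icc a b, dist (γ s) (γ t) = c * |s - t|

/-- A Busemann space: a geodesic space in which the distance between any two
affinely reparametrized geodesics is a convex function. -/
def IsBusemann (X : Type*) [MetricSpace X] : Prop :=
  GeodesicSpace X ∧
  ∀ (γ γ' : ℝ → X) (a b c d : ℝ), AffinelyReparamGeodesic γ a b →
    AffinelyReparamGeodesic γ' c d →
    ConvexOn ℝ (Set.Icc a b ×ˢ Set.Icc c d) (fun p : ℝ × ℝ => dist (γ p.1) (γ' p.2))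

def StdGeo {X : Type*} [MetricSpace X] (δ : ℝ → X) (x y : X) : Prop :=
  δ 0 = x ∧ δ 1 = y ∧
    ∀ s ∈ Set.Icc (0:ℝ) 1, ∀ t ∈ Set.Icc (0:ℝ) 1, dist (δ s) (δ t) = dist x y * |s - t|

lemma affImageIcc {a b : ℝ} (hab : a ≤ b) :
    (fun s : ℝ => a + s * (b - a)) '' Set.Icc 0 1 = Set.Icc a b := by
  have h0 : (0:ℝ) ≤ b - a := sub_nonneg.2 hab
  have h : (fun s : ℝ => a + s * (b - a)) = (fun u : ℝ => a + u) ∘ (fun s : ℝ => s * (b - a)) := rfl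
  rw [h, Set.image_comp, Set.image_mul_right_Icc (by norm_num) h0, Set.image_const_add_Icc]
  congr 1 <;> ring

lemma divImageIcc {d : ℝ} (hd : 0 < d) :
    (fun t : ℝ => t / d) '' Set.Icc 0 d = Set.Icc 0 1 := by
  simp only [div_eq_mul_inv]
  rw [Set.image_mul_right_Icc hd.le (inv_nonneg.2 hd.le)]
  rw [zero_mul, mul_inv_cancel₀ hd.ne']

lemma seg_to_std {X : Type*} [MetricSpace X] {S : Set X} {x y : X}
    (hS : IsGeodesicSegment S x y) :
    ∃ δ : ℝ → X, StdGeo δ x y ∧ S = δ '' Set.Icc 0 1 := by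
  obtain ⟨a, b, γ, hab, ha, hb, hiso, hSe⟩ := hS
  have haa : a ∈ Set.Icc a b := ⟨le_refl a, hab⟩
  have hbb : b ∈ Set.Icc a b := ⟨hab, le_refl b⟩
  have hdxy : dist x y = b - a := by
    rw [← ha, ← hb, hiso a haa b hbb, abs_sub_comm, abs_of_nonneg (sub_nonneg.2 hab)]
  have hmem : ∀ s ∈ Set.Icc (0:ℝ) 1, a + s * (b - a) ∈ Set.Icc a b := by
    intro s hs
    constructor
    · nlinarith [hs.1, hs.2, sub_nonneg.2 hab]
    · nlinarith [hs.1, hs.2, sub_nonneg.2 hab]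
  refine ⟨fun s => γ (a + s * (b - a)), ⟨?_, ?_, ?_⟩, ?_⟩
  · show γ (a + 0 * (b - a)) = x
    rw [show a + 0 * (b - a) = a by ring, ha]
  · show γ (a + 1 * (b - a)) = y
    rw [show a + 1 * (b - a) = b by ring, hb]
  · intro s hs t ht
    rw [hiso _ (hmem s hs) _ (hmem t ht), hdxy,
      show a + s * (b - a) - (a + t * (b - a)) = (s - t) * (b - a) by ring,
      abs_mul, abs_of_nonneg (sub_nonneg.2 hab)]
    ring
  · rw [hSe, ← affImageIcc hab, Set.image_image]

lemma std_isSegment {X : Type*} [MetricSpace X] {δ : ℝ → X} {x y : X}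
    (hxy : x ≠ y) (h : StdGeo δ x y) : IsGeodesicSegment (δ '' Set.Icc 0 1) x y := by
  obtain ⟨h0, h1, hiso⟩ := h
  have hd : 0 < dist x y := dist_pos.2 hxy
  have hmem : ∀ s ∈ Set.Icc (0:ℝ) (dist x y), s / dist x y ∈ Set.Icc (0:ℝ) 1 :=
    fun s hs => ⟨div_nonneg hs.1 hd.le, (div_le_one hd).2 hs.2⟩
  refine ⟨0, dist x y, fun t => δ (t / dist x y), hd.le, ?_, ?_, ?_, ?_⟩
  · show δ (0 / dist x y) = x
    rw [zero_div, h0]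
  · show δ (dist x y / dist x y) = y
    rw [div_self hd.ne', h1]
  · intro s hs t ht
    rw [hiso _ (hmem s hs) _ (hmem t ht), div_sub_div_same, abs_div,
      abs_of_pos hd, mul_div_cancel₀ _ hd.ne']
  · rw [← divImageIcc hd, Set.image_image]

lemma std_affine {X : Type*} [MetricSpace X] {δ : ℝ → X} {x y : X} (h : StdGeo δ x y) :
    AffinelyReparamGeodesic δ 0 1 :=
  ⟨dist x y, dist_nonneg, h.2.2⟩

lemma buse_ptwise {X : Type*} [MetricSpace X]
    (hconv : ∀ (γ γ' : ℝ → X) (a b c d : ℝ), AffinelyReparamGeodesic γ a b →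
      AffinelyReparamGeodesic γ' c d →
      ConvexOn ℝ (Set.Icc a b ×ˢ Set.Icc c d) (fun p : ℝ × ℝ => dist (γ p.1) (γ' p.2)))
    {x y : X} {δ₁ δ₂ : ℝ → X} (h₁ : StdGeo δ₁ x y) (h₂ : StdGeo δ₂ x y) :
    ∀ t ∈ Set.Icc (0:ℝ) 1, δ₁ t = δ₂ t := by
  intro t ht
  have F := hconv δ₁ δ₂ 0 1 0 1 (std_affine h₁) (std_affine h₂)
  have hm1 : ((0:ℝ), (0:ℝ)) ∈ Set.Icc (0:ℝ) 1 ×ˢ Set.Icc (0:ℝ) 1 := by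
    constructor <;> exact ⟨le_refl 0, zero_le_one⟩
  have hm2 : ((1:ℝ), (1:ℝ)) ∈ Set.Icc (0:ℝ) 1 ×ˢ Set.Icc (0:ℝ) 1 := by
    constructor <;> exact ⟨zero_le_one, le_refl 1⟩
  have key := F.2 hm1 hm2 (show (0:ℝ) ≤ 1 - t by linarith [ht.2]) ht.1 (show 1 - t + t = 1 by ring)
  simp only [Prod.smul_mk, smul_eq_mul, Prod.mk_add_mk, mul_zero, mul_one, add_zero,
    zero_add] at key
  rw [h₁.1, h₂.1, h₁.2.1, h₂.2.1, dist_self, dist_self, mul_zero, mul_zero, add_zero] at key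
  exact dist_le_zero.1 key

lemma param_unique {X : Type*} [MetricSpace X]
    (huniq : ∀ x y : X, x ≠ y → ∃! S : Set X, IsGeodesicSegment S x y)
    {p q : X} (hpq : p ≠ q) {δ₁ δ₂ : ℝ → X} (h₁ : StdGeo δ₁ p q) (h₂ : StdGeo δ₂ p q) :
    ∀ u ∈ Set.Icc (0:ℝ) 1, δ₁ u = δ₂ u := by
  intro u hu
  have hD : 0 < dist p q := dist_pos.2 hpq
  obtain ⟨S, -, hS⟩ := huniq p q hpq
  have hset : δ₁ '' Set.Icc 0 1 = δ₂ '' Set.Icc 0 1 :=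
    (hS _ (std_isSegment hpq h₁)).trans (hS _ (std_isSegment hpq h₂)).symm
  have hmem : δ₁ u ∈ δ₂ '' Set.Icc 0 1 := hset ▸ Set.mem_image_of_mem δ₁ hu
  obtain ⟨v, hv, hvu⟩ := hmem
  have h01 : (0:ℝ) ∈ Set.Icc (0:ℝ) 1 := ⟨le_refl 0, zero_le_one⟩
  have d1 : dist p (δ₁ u) = dist p q * u := by
    have h := h₁.2.2 0 h01 u hu
    rw [h₁.1, zero_sub, abs_neg, abs_of_nonneg hu.1] at h
    exact h
  have d2 : dist p (δ₂ v) = dist p q * v := by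
    have h := h₂.2.2 0 h01 v hv
    rw [h₂.1, zero_sub, abs_neg, abs_of_nonneg hv.1] at h
    exact h
  have : v = u := by
    have : dist p q * v = dist p q * u := by rw [← d1, ← d2, hvu]
    exact mul_left_cancel₀ hD.ne' this
  rw [← hvu, this]

lemma forward {X : Type*} [MetricSpace X] (hB : IsBusemann X) :
    ∃ W : X → X → ℝ → X, IsWHyperbolic W ∧
      ∀ x y : X, x ≠ y → ∃! S : Set X, IsGeodesicSegment S x y := by
  obtain ⟨hgeo, hconv⟩ := hB
  have exStd : ∀ x y : X, ∃ δ : ℝ → X, StdGeo δ x y := by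
    intro x y
    obtain ⟨S, hS⟩ := hgeo x y
    obtain ⟨δ, hδ, -⟩ := seg_to_std hS
    exact ⟨δ, hδ⟩
  choose g hg using exStd
  have hm1 : ((0:ℝ), (0:ℝ)) ∈ Set.Icc (0:ℝ) 1 ×ˢ Set.Icc (0:ℝ) 1 := by
    constructor <;> exact ⟨le_refl 0, zero_le_one⟩
  refine ⟨fun x y l => g x y l, ⟨?_, ?_, ?_, ?_⟩, ?_⟩
  · -- W1
    intro x y z l hl
    have hconst : AffinelyReparamGeodesic (fun _ : ℝ => z) 0 1 := ⟨0, le_refl 0, by simp⟩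
    have F := hconv (g x y) (fun _ => z) 0 1 0 1 (std_affine (hg x y)) hconst
    have hm2 : ((1:ℝ), (0:ℝ)) ∈ Set.Icc (0:ℝ) 1 ×ˢ Set.Icc (0:ℝ) 1 :=
      ⟨⟨zero_le_one, le_refl 1⟩, ⟨le_refl 0, zero_le_one⟩⟩
    have key := F.2 hm1 hm2 (show (0:ℝ) ≤ 1 - l by linarith [hl.2]) hl.1
      (show 1 - l + l = 1 by ring)
    simp only [Prod.smul_mk, smul_eq_mul, Prod.mk_add_mk, mul_zero, mul_one, add_zero,
      zero_add] at key
    rw [(hg x y).1, (hg x y).2.1] at key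
    rw [dist_comm z (g x y l), dist_comm z x, dist_comm z y]
    exact key
  · -- W2
    intro x y l hl l' hl'
    exact ((hg x y).2.2 l hl l' hl').trans (mul_comm _ _)
  · -- W3
    intro x y l hl
    have hstd₂ : StdGeo (fun m => g y x (1 - m)) x y := by
      refine ⟨?_, ?_, ?_⟩
    
      · show g y x (1 - 0) = x
        rw [show (1:ℝ) - 0 = 1 by ring, (hg y x).2.1]
      · show g y x (1 - 1) = y
        rw [show (1:ℝ) - 1 = 0 by ring, (hg y x).1]
      · intro s hs t ht
        have hs' : 1 - s ∈ Set.Icc (0:ℝ) 1 := ⟨by linarith [hs.2], by linarith [hs.1]⟩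
        have ht' : 1 - t ∈ Set.Icc (0:ℝ) 1 := ⟨by linarith [ht.2], by linarith [ht.1]⟩
        show dist (g y x (1 - s)) (g y x (1 - t)) = dist x y * |s - t|
        rw [(hg y x).2.2 _ hs' _ ht', dist_comm y x,
          show (1 - s) - (1 - t) = -(s - t) by ring, abs_neg]
    exact buse_ptwise hconv (hg x y) hstd₂ l hl
  · -- W4
    intro x y z w l hl
    have F := hconv (g x z) (g y w) 0 1 0 1 (std_affine (hg x z)) (std_affine (hg y w))
    have hm2 : ((1:ℝ), (1:ℝ)) ∈ Set.Icc (0:ℝ) 1 ×ˢ Set.Icc (0:ℝ) 1 :=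
      ⟨⟨zero_le_one, le_refl 1⟩, ⟨zero_le_one, le_refl 1⟩⟩
    have key := F.2 hm1 hm2 (show (0:ℝ) ≤ 1 - l by linarith [hl.2]) hl.1
      (show 1 - l + l = 1 by ring)
    simp only [Prod.smul_mk, smul_eq_mul, Prod.mk_add_mk, mul_zero, mul_one, add_zero,
      zero_add] at key
    rw [(hg x z).1, (hg x z).2.1, (hg y w).1, (hg y w).2.1] at key
    exact key
  · -- uniqueness of segments
    intro x y hxy
    refine ⟨g x y '' Set.Icc 0 1, std_isSegment hxy (hg x y), ?_⟩
    intro S hS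
    obtain ⟨δ, hδ, hSeq⟩ := seg_to_std hS
    rw [hSeq]
    exact Set.image_congr (buse_ptwise hconv hδ (hg x y))

lemma backward {X : Type*} [MetricSpace X]
    (hyp : ∃ W : X → X → ℝ → X, IsWHyperbolic W ∧
      ∀ x y : X, x ≠ y → ∃! S : Set X, IsGeodesicSegment S x y) :
    IsBusemann X := by
  obtain ⟨W, ⟨W1, W2, W3, W4⟩, huniq⟩ := hyp
  have h0m : (0:ℝ) ∈ Set.Icc (0:ℝ) 1 := ⟨le_refl 0, zero_le_one⟩
  have h1m : (1:ℝ) ∈ Set.Icc (0:ℝ) 1 := ⟨zero_le_one, le_refl 1⟩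
  have hW0 : ∀ x y : X, W x y 0 = x := by
    intro x y
    have h := W1 x y x 0 h0m
    simp only [dist_self, mul_zero, sub_zero, one_mul, zero_mul, add_zero, zero_add] at h
    exact (dist_le_zero.1 h).symm
  have hW1e : ∀ x y : X, W x y 1 = y := by
    intro x y
    have h := W1 x y y 1 h1m
    simp only [dist_self, sub_self, zero_mul, one_mul, mul_zero, zero_add, add_zero] at h
    exact (dist_le_zero.1 h).symm
  have hStdW : ∀ x y : X, StdGeo (fun l => W x y l) x y := by
    intro x y
    exact ⟨hW0 x y, hW1e x y, fun s hs t ht => (W2 x y s hs t ht).trans (mul_comm _ _)⟩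
  have hWc : ∀ (x : X) (l : ℝ), l ∈ Set.Icc (0:ℝ) 1 → W x x l = x := by
    intro x l hl
    have h := W2 x x l hl 0 h0m
    rw [hW0, dist_self, mul_zero] at h
    exact dist_eq_zero.1 h
  -- the midpoint composition lemma
  have hWW : ∀ (x y : X) (l₁ l₂ lam : ℝ), l₁ ∈ Set.Icc (0:ℝ) 1 → l₂ ∈ Set.Icc (0:ℝ) 1 →
      lam ∈ Set.Icc (0:ℝ) 1 →
      W (W x y l₁) (W x y l₂) lam = W x y ((1 - lam) * l₁ + lam * l₂) := by
    intro x y l₁ l₂ lam h1 h2 hlam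
    have hmem : (1 - lam) * l₁ + lam * l₂ ∈ Set.Icc (0:ℝ) 1 := by
      constructor
      · nlinarith [h1.1, h2.1, hlam.1, hlam.2]
      · nlinarith [h1.2, h2.2, hlam.1, hlam.2]
    by_cases hxy : x = y
    · subst hxy
      rw [hWc x _ h1, hWc x _ h2, hWc x _ hlam, hWc x _ hmem]
    · by_cases hl : l₁ = l₂
      · subst hl
        rw [show (1 - lam) * l₁ + lam * l₁ = l₁ by ring]
        exact hWc _ lam hlam
      · have hdxy : 0 < dist x y := dist_pos.2 hxy
        have hdpq : dist (W x y l₁) (W x y l₂) = |l₁ - l₂| * dist x y := W2 x y l₁ h1 l₂ h2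
        have hpq : W x y l₁ ≠ W x y l₂ := by
          intro h
          apply hl
          have := hdpq.symm.trans (by rw [h, dist_self])
          have habs : |l₁ - l₂| = 0 := by
            rcases mul_eq_zero.1 this with h' | h'
            · exact h'
            · exact absurd h' hdxy.ne'
          have := abs_eq_zero.1 habs
          linarith [this]
      
        have hstd₁ : StdGeo (fun u => W x y ((1 - u) * l₁ + u * l₂)) (W x y l₁) (W x y l₂) := by
          refine ⟨?_, ?_, ?_⟩
          · show W x y ((1 - 0) * l₁ + 0 * l₂) = W x y l₁
            rw [show (1 - (0:ℝ)) * l₁ + 0 * l₂ = l₁ by ring]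
          · show W x y ((1 - 1) * l₁ + 1 * l₂) = W x y l₂
            rw [show (1 - (1:ℝ)) * l₁ + 1 * l₂ = l₂ by ring]
          · intro s hs t ht
            have hms : (1 - s) * l₁ + s * l₂ ∈ Set.Icc (0:ℝ) 1 := by
              constructor
              · nlinarith [h1.1, h2.1, hs.1, hs.2]
              · nlinarith [h1.2, h2.2, hs.1, hs.2]
            have hmt : (1 - t) * l₁ + t * l₂ ∈ Set.Icc (0:ℝ) 1 := by
              constructor
              · nlinarith [h1.1, h2.1, ht.1, ht.2]
              · nlinarith [h1.2, h2.2, ht.1, ht.2]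
            show dist (W x y _) (W x y _) = _
            rw [W2 x y _ hms _ hmt, hdpq,
              show ((1 - s) * l₁ + s * l₂) - ((1 - t) * l₁ + t * l₂) = (s - t) * (l₂ - l₁) by
                ring, abs_mul, abs_sub_comm l₂ l₁]
            ring
        exact param_unique huniq hpq (hStdW _ _) hstd₁ lam hlam
  -- the key convexity inequality
  have hkey : ∀ (x y z w : X) (l₁ l₂ m₁ m₂ μ ν : ℝ), l₁ ∈ Set.Icc (0:ℝ) 1 →
      l₂ ∈ Set.Icc (0:ℝ) 1 → m₁ ∈ Set.Icc (0:ℝ) 1 → m₂ ∈ Set.Icc (0:ℝ) 1 →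
      0 ≤ μ → 0 ≤ ν → μ + ν = 1 →
      dist (W x y (μ * l₁ + ν * l₂)) (W z w (μ * m₁ + ν * m₂)) ≤
        μ * dist (W x y l₁) (W z w m₁) + ν * dist (W x y l₂) (W z w m₂) := by
    intro x y z w l₁ l₂ m₁ m₂ μ ν hl1 hl2 hm1 hm2 hμ hν hμν
    have hνm : ν ∈ Set.Icc (0:ℝ) 1 := ⟨hν, by linarith⟩
    have hμe : μ = 1 - ν := by linarith
    rw [hμe, ← hWW x y l₁ l₂ ν hl1 hl2 hνm, ← hWW z w m₁ m₂ ν hm1 hm2 hνm]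
    exact W4 (W x y l₁) (W z w m₁) (W x y l₂) (W z w m₂) ν hνm
  -- geodesic space
  have hgeo : GeodesicSpace X := by
    intro x y
    by_cases hxy : x = y
    · subst hxy
      refine ⟨{x}, 0, 0, fun _ => x, le_refl 0, rfl, rfl, ?_, ?_⟩
      · intro s hs t ht
        rw [Set.Icc_self, Set.mem_singleton_iff] at hs ht
        subst hs; subst ht
        simp
      · simp
    · exact ⟨_, std_isSegment hxy (hStdW x y)⟩
  refine ⟨hgeo, ?_⟩
  -- representation of affinely reparametrized geodesics
  have rep : ∀ (γ : ℝ → X) (a b : ℝ), AffinelyReparamGeodesic γ a b →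
      ∃ (x y : X) (φ : ℝ → ℝ), (∀ s ∈ Set.Icc a b, φ s ∈ Set.Icc (0:ℝ) 1 ∧ γ s = W x y (φ s)) ∧
        ∀ (μ ν s t : ℝ), μ + ν = 1 → φ (μ * s + ν * t) = μ * φ s + ν * φ t := by
    intro γ a b hγ
    obtain ⟨c, hc0, hcd⟩ := hγ
    by_cases hdeg : c = 0 ∨ b ≤ a
    · refine ⟨γ a, γ a, fun _ => 0, ?_, by intro μ ν s t h; ring⟩
      intro s hs
      refine ⟨h0m, ?_⟩
      rw [hWc (γ a) 0 h0m]
      rcases hdeg with hc | hba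
      · have ham : a ∈ Set.Icc a b := ⟨le_refl a, hs.1.trans hs.2⟩
        have := hcd s hs a ham
        rw [hc, zero_mul] at this
        exact dist_eq_zero.1 this
      · have : s = a := le_antisymm (hs.2.trans hba) hs.1
        rw [this]
    · push_neg at hdeg
      obtain ⟨hc, hba⟩ := hdeg
      have hcpos : 0 < c := lt_of_le_of_ne hc0 (Ne.symm hc)
      have hab : a < b := hba
      have hbapos : 0 < b - a := sub_pos.2 hab
      have ham : a ∈ Set.Icc a b := ⟨le_refl a, hab.le⟩
      have hbm : b ∈ Set.Icc a b := ⟨hab.le, le_refl b⟩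
      have hdxy : dist (γ a) (γ b) = c * (b - a) := by
        rw [hcd a ham b hbm, abs_sub_comm, abs_of_pos hbapos]
      have hxy : γ a ≠ γ b := by
        intro h
        have := hdxy.symm.trans (by rw [h, dist_self])
        nlinarith
      have hmem : ∀ u ∈ Set.Icc (0:ℝ) 1, a + u * (b - a) ∈ Set.Icc a b := by
        intro u hu
        constructor
        · nlinarith [hu.1, hu.2]
        · nlinarith [hu.1, hu.2]
      have hstd : StdGeo (fun u => γ (a + u * (b - a))) (γ a) (γ b) := by
        refine ⟨?_, ?_, ?_⟩
        · show γ (a + 0 * (b - a)) = γ a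
          rw [show a + 0 * (b - a) = a by ring]
        · show γ (a + 1 * (b - a)) = γ b
          rw [show a + 1 * (b - a) = b by ring]
        · intro s hs t ht
          show dist (γ _) (γ _) = _
          rw [hcd _ (hmem s hs) _ (hmem t ht), hdxy,
            show (a + s * (b - a)) - (a + t * (b - a)) = (s - t) * (b - a) by ring,
            abs_mul, abs_of_pos hbapos]
          ring
      have hpu := param_unique huniq hxy hstd (hStdW (γ a) (γ b))
      refine ⟨γ a, γ b, fun s => (s - a) / (b - a), ?_, ?_⟩
      · intro s hs
        have hφm : (s - a) / (b - a) ∈ Set.Icc (0:ℝ) 1 :=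
          ⟨div_nonneg (sub_nonneg.2 hs.1) hbapos.le,
            (div_le_one hbapos).2 (by linarith [hs.2])⟩
        refine ⟨hφm, ?_⟩
        have := hpu _ hφm
        rw [show a + (s - a) / (b - a) * (b - a) = s by field_simp; ring] at this
        exact this
      · intro μ ν s t hμν
        show (μ * s + ν * t - a) / (b - a) = μ * ((s - a) / (b - a)) + ν * ((t - a) / (b - a))
        have h1 : μ * s + ν * t - a = μ * (s - a) + ν * (t - a) := by
          linear_combination a * hμν
        rw [h1]
        ring
  intro γ γ' a b c d hγ hγ'
  obtain ⟨x, y, φ, hφ, hφaff⟩ := rep γ a b hγ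
  obtain ⟨z, w, ψ, hψ, hψaff⟩ := rep γ' c d hγ'
  constructor
  · exact (convex_Icc a b).prod (convex_Icc c d)
  · rintro ⟨s₁, t₁⟩ ⟨hs₁, ht₁⟩ ⟨s₂, t₂⟩ ⟨hs₂, ht₂⟩ μ ν hμ hν hμν
    have hsc : μ * s₁ + ν * s₂ ∈ Set.Icc a b := by
      simpa using (convex_Icc a b) hs₁ hs₂ hμ hν hμν
    have htc : μ * t₁ + ν * t₂ ∈ Set.Icc c d := by
      simpa using (convex_Icc c d) ht₁ ht₂ hμ hν hμν
    show dist (γ (μ • (s₁, t₁) + ν • (s₂, t₂)).1) (γ' (μ • (s₁, t₁) + ν • (s₂, t₂)).2) ≤ _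
    simp only [Prod.smul_mk, smul_eq_mul, Prod.mk_add_mk]
    rw [(hφ _ hsc).2, (hψ _ htc).2, hφaff μ ν s₁ s₂ hμν, hψaff μ ν t₁ t₂ hμν,
      (hφ _ hs₁).2, (hψ _ ht₁).2, (hφ _ hs₂).2, (hψ _ ht₂).2]
    exact hkey x y z w (φ s₁) (φ s₂) (ψ t₁) (ψ t₂) μ ν (hφ _ hs₁).1 (hφ _ hs₂).1
      (hψ _ ht₁).1 (hψ _ ht₂).1 hμ hν hμν

theorem stmt8 {X : Type*} [MetricSpace X] :
    IsBusemann X ↔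
    ∃ W : X → X → ℝ → X, IsWHyperbolic W ∧
      ∀ x y : X, x ≠ y → ∃! S : Set X, IsGeodesicSegment S x y := by
  exact ⟨forward, backward⟩
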